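/- For h > 0, the derivative of h ↦ sinh(h)·arcsinh(1/(2·sinh(h))) equals cosh(h)·arcsinh(1/(2·sinh(h))) − cosh(h)/sqrt(4·sinh(h)² + 1), and this derivative is positive. -/

import Mathlib

open Real

lemma sinh_lt_mul_cosh {t : ℝ} (ht : 0 < t) : Real.sinh t < t * Real.cosh t := by
  have H : StrictMonoOn (fun x : ℝ => x * Real.cosh x - Real.sinh x) (Set.Ici 0) := by
    apply strictMonoOn_of_deriv_pos (convex_Ici _)
    · exact ((continuous_id.mul Real.continuous_cosh).sub Real.continuous_sinh).continuousOn
    · intro x hx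
      rw [interior_Ici, Set.mem_Ioi] at hx
      have : HasDerivAt (fun x : ℝ => x * Real.cosh x - Real.sinh x)
          (1 * Real.cosh x + x * Real.sinh x - Real.cosh x) x :=
        ((hasDerivAt_id x).mul (Real.hasDerivAt_cosh x)).sub (Real.hasDerivAt_sinh x)
      rw [this.deriv]
      nlinarith [Real.sinh_pos_iff.2 hx]
  have := H (Set.self_mem_Ici) (Set.mem_Ici.2 ht.le) ht
  simpa using this

lemma arsinh_key {u : ℝ} (hu : 0 < u) : u / Real.sqrt (1 + u ^ 2) < Real.arsinh u := by
  have ht : 0 < Real.arsinh u := Real.arsinh_pos_iff.2 hu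
  have h1 := sinh_lt_mul_cosh ht
  rw [Real.sinh_arsinh, Real.cosh_arsinh] at h1
  have hs : 0 < Real.sqrt (1 + u ^ 2) := Real.sqrt_pos.2 (by positivity)
  rw [div_lt_iff₀ hs]
  linarith

theorem hypercycle_density_deriv (h : ℝ) (hh : 0 < h) :
    HasDerivAt (fun x : ℝ => Real.sinh x * Real.arsinh (1 / (2 * Real.sinh x)))
      (Real.cosh h * Real.arsinh (1 / (2 * Real.sinh h)) -
        Real.cosh h / Real.sqrt (4 * Real.sinh h ^ 2 + 1)) h ∧
    0 < Real.cosh h * Real.arsinh (1 / (2 * Real.sinh h)) -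
        Real.cosh h / Real.sqrt (4 * Real.sinh h ^ 2 + 1) := by
  have hs : 0 < Real.sinh h := Real.sinh_pos_iff.2 hh
  have hc : 0 < Real.cosh h := Real.cosh_pos h
  have hsq : 0 < Real.sqrt (4 * Real.sinh h ^ 2 + 1) := Real.sqrt_pos.2 (by positivity)
  set s := Real.sinh h with hsdef
  have hu : (0:ℝ) < 1 / (2 * s) := by positivity
  constructor
  · -- derivative
    have hg : HasDerivAt (fun x : ℝ => 1 / (2 * Real.sinh x))
        (-(2 * Real.cosh h) / (2 * s) ^ 2) h := by
      have hinv : HasDerivAt (fun x : ℝ => (2 * Real.sinh x)⁻¹)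
          (-(2 * Real.cosh h) / (2 * s) ^ 2) h :=
        ((Real.hasDerivAt_sinh h).const_mul 2).inv (by positivity)
      simpa only [one_div] using hinv
    have ha : HasDerivAt (fun x : ℝ => Real.arsinh (1 / (2 * Real.sinh x)))
        ((Real.sqrt (1 + (1 / (2 * s)) ^ 2))⁻¹ * (-(2 * Real.cosh h) / (2 * s) ^ 2)) h :=
      (Real.hasDerivAt_arsinh _).comp h hg
    have hprod : HasDerivAt (fun x : ℝ => Real.sinh x * Real.arsinh (1 / (2 * Real.sinh x)))
        (Real.cosh h * Real.arsinh (1 / (2 * s)) + s * ((Real.sqrt (1 + (1 / (2 * s)) ^ 2))⁻¹ *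
          (-(2 * Real.cosh h) / (2 * s) ^ 2))) h := (Real.hasDerivAt_sinh h).mul ha
    convert hprod using 1
    rw [mul_comm (Real.cosh h) (Real.arsinh (1 / (2 * s)))]
    have key : Real.sqrt (1 + (1 / (2 * s)) ^ 2) = Real.sqrt (4 * s ^ 2 + 1) / (2 * s) := by
      rw [eq_div_iff (by positivity), ← Real.sqrt_sq (by positivity : (0:ℝ) ≤ 2 * s),
        ← Real.sqrt_mul (by positivity)]
      congr 1
      field_simp
      rw [Real.sq_sqrt (by positivity)]
      ring
    rw [key]
    have h2s : (2 * s) ≠ 0 := by positivity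
    field_simp
    ring
  · -- positivity
    have key := arsinh_key hu
    have heq : (1 / (2 * s)) / Real.sqrt (1 + (1 / (2 * s)) ^ 2)
        = 1 / Real.sqrt (4 * s ^ 2 + 1) := by
      rw [show Real.sqrt (1 + (1 / (2 * s)) ^ 2) = Real.sqrt (4 * s ^ 2 + 1) / (2 * s) by
        rw [eq_div_iff (by positivity), ← Real.sqrt_sq (by positivity : (0:ℝ) ≤ 2 * s),
          ← Real.sqrt_mul (by positivity)]
        congr 1
        field_simp
        rw [Real.sq_sqrt (by positivity)]
        ring]
      field_simp
    rw [heq] at key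
    have : Real.cosh h / Real.sqrt (4 * s ^ 2 + 1)
        < Real.cosh h * Real.arsinh (1 / (2 * s)) := by
      rw [div_eq_mul_one_div]
      exact (mul_lt_mul_iff_right₀ hc).2 key
    linarith
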